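/- Let 0 < ε ≤ 1/2, σ > 0, μ ∈ ℝ, let q ∈ ℝ satisfy Φ(q) = ε, and set λ = −qσ (so λ ≥ 0). Then the Lebesgue measure of the set { u ∈ (0, 1] : Φ(−|μ − log u| / σ) ≥ ε } equals max{ 1 − e^{μ − λ}, 0 } + min{ e^{μ + λ} − 1, 0 }. -/
import Mathlib

open MeasureTheory

/-- The standard normal cumulative distribution function. -/
noncomputable def Phi (x : ℝ) : ℝ :=
  ∫ t in Set.Iic x, Real.exp (-t^2/2) / Real.sqrt (2 * Real.pi)

lemma phi_integrable : Integrable (fun t : ℝ => Real.exp (-t^2/2) / Real.sqrt (2 * Real.pi)) := by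
  have h : Integrable (fun t : ℝ => Real.exp (-(1/2 : ℝ) * t ^ 2)) :=
    integrable_exp_neg_mul_sq (by norm_num)
  have := h.div_const (Real.sqrt (2 * Real.pi))
  convert this using 2 with t
  ring_nf

lemma phi_pos (t : ℝ) : 0 < Real.exp (-t^2/2) / Real.sqrt (2 * Real.pi) :=
  div_pos (Real.exp_pos _) (Real.sqrt_pos.mpr (by positivity))

lemma Phi_strictMono : StrictMono Phi := by
  intro x y hxy
  have h : Phi y - Phi x = ∫ t in x..y, Real.exp (-t^2/2) / Real.sqrt (2 * Real.pi) :=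
    intervalIntegral.integral_Iic_sub_Iic phi_integrable.integrableOn phi_integrable.integrableOn
  have hpos : 0 < ∫ t in x..y, Real.exp (-t^2/2) / Real.sqrt (2 * Real.pi) := by
    rw [intervalIntegral.integral_pos_iff_support_of_nonneg_ae
      (Filter.Eventually.of_forall fun t => (phi_pos t).le) phi_integrable.intervalIntegrable]
    refine ⟨hxy, ?_⟩
    have : Function.support (fun t : ℝ => Real.exp (-t^2/2) / Real.sqrt (2 * Real.pi)) = Set.univ := by
      ext t
      simp only [Function.mem_support, Set.mem_univ, iff_true]
      exact (phi_pos t).ne'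
    rw [this, Set.univ_inter, Real.volume_Ioc]
    simp only [ENNReal.ofReal_pos]
    linarith
  linarith

lemma Phi_zero : Phi 0 = 1/2 := by
  have htot : ∫ t : ℝ, Real.exp (-t^2/2) / Real.sqrt (2 * Real.pi) = 1 := by
    have h : ∫ t : ℝ, Real.exp (-(1/2 : ℝ) * t ^ 2) = Real.sqrt (Real.pi / (1/2)) :=
      integral_gaussian (1/2)
    rw [MeasureTheory.integral_div]
    rw [show (fun t : ℝ => Real.exp (-t^2/2)) = (fun t : ℝ => Real.exp (-(1/2 : ℝ) * t ^ 2)) by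
      funext t; ring_nf]
    rw [h]
    rw [div_eq_one_iff_eq (by positivity)]
    congr 1; ring
  have hsymm : Phi 0 = ∫ t in Set.Ioi (0:ℝ), Real.exp (-t^2/2) / Real.sqrt (2 * Real.pi) := by
    have h := integral_comp_neg_Iic (0:ℝ)
      (fun t => Real.exp (-t^2/2) / Real.sqrt (2 * Real.pi))
    simp only [neg_zero] at h
    unfold Phi
    rw [← h]
    refine MeasureTheory.setIntegral_congr_fun measurableSet_Iic fun t _ => ?_
    rw [neg_sq]
  have hsplit : Phi 0 + ∫ t in Set.Ioi (0:ℝ), Real.exp (-t^2/2) / Real.sqrt (2 * Real.pi) = 1 := by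
    rw [← htot]
    exact intervalIntegral.integral_Iic_add_Ioi phi_integrable.integrableOn
      phi_integrable.integrableOn
  linarith [hsymm, hsplit]

theorem measure_conditional_error_exceeds (ε σ μ q lam : ℝ)
    (hε : 0 < ε) (hε' : ε ≤ 1/2) (hσ : 0 < σ)
    (hq : Phi q = ε) (hlam : lam = -(q * σ)) :
    (volume {u : ℝ | u ∈ Set.Ioc (0:ℝ) 1 ∧ ε ≤ Phi (-|μ - Real.log u| / σ)}).toReal
      = max (1 - Real.exp (μ - lam)) 0 + min (Real.exp (μ + lam) - 1) 0 := by
  have hq0 : q ≤ 0 := by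
    by_contra h
    push_neg at h
    have := Phi_strictMono h
    rw [Phi_zero, hq] at this
    linarith
  have hlam0 : 0 ≤ lam := by
    rw [hlam]; nlinarith
  set a := Real.exp (μ - lam) with ha
  set b := Real.exp (μ + lam) with hb
  have hab : a ≤ b := Real.exp_le_exp.mpr (by linarith)
  have hset : {u : ℝ | u ∈ Set.Ioc (0:ℝ) 1 ∧ ε ≤ Phi (-|μ - Real.log u| / σ)}
      = Set.Icc a (min b 1) := by
    ext u
    simp only [Set.mem_setOf_eq, Set.mem_Ioc, Set.mem_Icc, le_min_iff]
    constructor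
    · rintro ⟨⟨hu0, hu1⟩, hcond⟩
      rw [← hq] at hcond
      have h1 : q ≤ -|μ - Real.log u| / σ := (Phi_strictMono.le_iff_le).mp hcond
      have h2 : |μ - Real.log u| ≤ lam := by
        rw [hlam]
        rw [le_div_iff₀ hσ] at h1
        nlinarith
      rw [abs_le] at h2
      constructor
      · rw [ha, ← Real.exp_log hu0]
        exact Real.exp_le_exp.mpr (by linarith [h2.1])
      · refine ⟨?_, hu1⟩
        rw [hb, ← Real.exp_log hu0]
        exact Real.exp_le_exp.mpr (by linarith [h2.2])
    · rintro ⟨hua, hub, hu1⟩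
      have hu0 : 0 < u := lt_of_lt_of_le (Real.exp_pos _) hua
      have hla : μ - lam ≤ Real.log u := by
        rw [← Real.log_exp (μ - lam)]
        exact Real.log_le_log (Real.exp_pos _) hua
      have hlb : Real.log u ≤ μ + lam := by
        rw [← Real.log_exp (μ + lam)]
        exact Real.log_le_log hu0 hub
      refine ⟨⟨hu0, hu1⟩, ?_⟩
      rw [← hq]
      apply Phi_strictMono.le_iff_le.mpr
      rw [le_div_iff₀ hσ] at *
      have habs : |μ - Real.log u| ≤ lam := abs_le.mpr ⟨by linarith, by linarith⟩
      nlinarith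
  rw [hset, Real.volume_Icc, ENNReal.toReal_ofReal']
  rcases le_total b 1 with hb1 | hb1
  · have ha1 : a ≤ 1 := hab.trans hb1
    rw [min_eq_left hb1, max_eq_left (by linarith), max_eq_left (by linarith),
      min_eq_left (by linarith)]
    ring
  · rw [min_eq_right hb1, min_eq_right (by linarith)]
    rcases le_total a 1 with ha1 | ha1
    · rw [max_eq_left (show (0:ℝ) ≤ 1 - a by linarith)]; ring
    · rw [max_eq_right (show 1 - a ≤ (0:ℝ) by linarith)]; ring
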